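/- Let X and Y be real normed vector spaces with X infinite-dimensional, let T : X → Y be a bounded linear operator, and let E be a dense linear subspace of X. Then Δ(T|_E) ≥ Δ(T). -/

import Mathlib

set_option maxHeartbeats 1000000
set_option synthInstance.maxHeartbeats 400000

/-- The operator norm of the restriction of `T` to a subspace `M`. -/
noncomputable def restrictedNorm {X Y : Type*} [NormedAddCommGroup X] [NormedSpace ℝ X]
    [NormedAddCommGroup Y] [NormedSpace ℝ Y] (T : X →L[ℝ] Y) (M : Submodule ℝ X) : ℝ :=
  ‖T.comp M.subtypeL‖

/-- `Γ(T) = inf_{M ∈ I(X)} ‖T|_M‖`, the infimum of the norms of the restrictions of `T`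
to infinite-dimensional subspaces of the domain. -/
noncomputable def opGamma {X Y : Type*} [NormedAddCommGroup X] [NormedSpace ℝ X]
    [NormedAddCommGroup Y] [NormedSpace ℝ Y] (T : X →L[ℝ] Y) : ℝ :=
  sInf {r : ℝ | ∃ M : Submodule ℝ X, ¬ FiniteDimensional ℝ M ∧ r = restrictedNorm T M}

/-- `Δ(T) = sup_{M ∈ I(X)} Γ(T|_M)`. -/
noncomputable def opDelta {X Y : Type*} [NormedAddCommGroup X] [NormedSpace ℝ X]
    [NormedAddCommGroup Y] [NormedSpace ℝ Y] (T : X →L[ℝ] Y) : ℝ :=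
  sSup {r : ℝ | ∃ M : Submodule ℝ X, ¬ FiniteDimensional ℝ M ∧
    r = opGamma (T.comp M.subtypeL)}

section Helpers

variable {X Y : Type*} [NormedAddCommGroup X] [NormedSpace ℝ X]
    [NormedAddCommGroup Y] [NormedSpace ℝ Y]

/-- Pushing a submodule of a submodule down preserves the restricted norm. -/
lemma norm_comp_subtypeL_map (A : X →L[ℝ] Y) (M : Submodule ℝ X) (W : Submodule ℝ M) :
    ‖(A.comp M.subtypeL).comp W.subtypeL‖ = ‖A.comp (W.map M.subtype).subtypeL‖ := by
  apply le_antisymm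
  · refine ContinuousLinearMap.opNorm_le_bound _ (ContinuousLinearMap.opNorm_nonneg _) ?_
    intro u
    have hmem : (u : M).1 ∈ W.map M.subtype := ⟨u, u.2, rfl⟩
    have : ((A.comp M.subtypeL).comp W.subtypeL) u
        = (A.comp (W.map M.subtype).subtypeL) ⟨(u : M).1, hmem⟩ := rfl
    rw [this]
    calc ‖(A.comp (W.map M.subtype).subtypeL) ⟨(u : M).1, hmem⟩‖
        ≤ ‖A.comp (W.map M.subtype).subtypeL‖ * ‖(⟨(u : M).1, hmem⟩ : W.map M.subtype)‖ :=
          (A.comp (W.map M.subtype).subtypeL).le_opNorm _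
      _ = ‖A.comp (W.map M.subtype).subtypeL‖ * ‖u‖ := by
          congr 1
  · refine ContinuousLinearMap.opNorm_le_bound _ (ContinuousLinearMap.opNorm_nonneg _) ?_
    rintro ⟨w, hw⟩
    obtain ⟨u, hu, rfl⟩ := hw
    have : (A.comp (W.map M.subtype).subtypeL) ⟨M.subtype u, ⟨u, hu, rfl⟩⟩
        = ((A.comp M.subtypeL).comp W.subtypeL) ⟨u, hu⟩ := rfl
    rw [this]
    calc ‖((A.comp M.subtypeL).comp W.subtypeL) ⟨u, hu⟩‖
        ≤ ‖(A.comp M.subtypeL).comp W.subtypeL‖ * ‖(⟨u, hu⟩ : W)‖ :=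
          ContinuousLinearMap.le_opNorm _ _
      _ = _ := by congr 1

lemma not_finiteDimensional_inf_ker {A : Submodule ℝ X} (hA : ¬ FiniteDimensional ℝ A)
    (f : X →L[ℝ] ℝ) : ¬ FiniteDimensional ℝ (A ⊓ LinearMap.ker (f : X →ₗ[ℝ] ℝ) : Submodule ℝ X) := by
  intro hfin
  apply hA
  set g : A →ₗ[ℝ] ℝ := (f : X →ₗ[ℝ] ℝ).domRestrict A with hg
  have hker : LinearMap.ker g = (A ⊓ LinearMap.ker (f : X →ₗ[ℝ] ℝ) : Submodule ℝ X).comap A.subtype := by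
    ext x
    simp [hg, LinearMap.mem_ker, Submodule.mem_comap, x.2]
  have h1 : FiniteDimensional ℝ (LinearMap.ker g) := by
    rw [hker]
    exact (Submodule.comapSubtypeEquivOfLe
      (inf_le_left : A ⊓ LinearMap.ker (f : X →ₗ[ℝ] ℝ) ≤ A)).symm.finiteDimensional
  have h2 : FiniteDimensional ℝ (LinearMap.range g) := inferInstance
  have hrn := g.lift_rank_range_add_rank_ker
  have h1' : Module.rank ℝ (LinearMap.ker g) < Cardinal.aleph0 := Module.rank_lt_aleph0 ℝ _
  have h2' : Module.rank ℝ (LinearMap.range g) < Cardinal.aleph0 := Module.rank_lt_aleph0 ℝ _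
  have : Cardinal.lift.{0} (Module.rank ℝ A) < Cardinal.aleph0 := by
    rw [← hrn]
    exact Cardinal.add_lt_aleph0 (Cardinal.lift_lt_aleph0.mpr h2')
      (Cardinal.lift_lt_aleph0.mpr h1')
  exact Module.rank_lt_aleph0_iff.mp (Cardinal.lift_lt_aleph0.mp this)

lemma not_finiteDimensional_inf_finset_ker {M : Submodule ℝ X} (hM : ¬ FiniteDimensional ℝ M)
    (s : Finset (X × (X →L[ℝ] ℝ))) :
    ¬ FiniteDimensional ℝ (M ⊓ ⨅ p ∈ s, LinearMap.ker (p.2 : X →ₗ[ℝ] ℝ) : Submodule ℝ X) := by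
  classical
  induction s using Finset.induction_on with
  | empty =>
      rw [show (M ⊓ ⨅ p ∈ (∅ : Finset (X × (X →L[ℝ] ℝ))), LinearMap.ker (p.2 : X →ₗ[ℝ] ℝ)) = M by simp]
      exact hM
  | insert a s hns ih =>
    rw [Finset.iInf_insert, inf_comm (LinearMap.ker (a.2 : X →ₗ[ℝ] ℝ)), ← inf_assoc]
    exact not_finiteDimensional_inf_ker ih a.2

/-- A continuous functional vanishing on a finite-dimensional subspace, `1` at a point. -/
lemma exists_functional_eq_one_of_nmem {F : Submodule ℝ X} (hF : FiniteDimensional ℝ F)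
    {x : X} (hx : x ∉ F) : ∃ f : X →L[ℝ] ℝ, f x = 1 ∧ ∀ y ∈ F, f y = 0 := by
  haveI := hF
  haveI : IsClosed (F : Set X) := F.closed_of_finiteDimensional
  set z : X ⧸ F := Submodule.Quotient.mk x with hz
  have hz0 : z ≠ 0 := by
    simpa [hz, Submodule.Quotient.mk_eq_zero] using hx
  obtain ⟨g, -, hgz⟩ := exists_dual_vector ℝ z (norm_ne_zero_iff.mpr hz0)
  set mkC : X →L[ℝ] (X ⧸ F) :=
    LinearMap.mkContinuous F.mkQ 1 (fun y => by
      simpa using Submodule.Quotient.norm_mk_le F y) with hmk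
  refine ⟨‖z‖⁻¹ • (g.comp mkC), ?_, ?_⟩
  · have h1 : mkC x = z := rfl
    have h2 : (g.comp mkC) x = ‖z‖ := by
      rw [ContinuousLinearMap.comp_apply, h1]
      exact_mod_cast hgz
    have h3 : ‖z‖ ≠ 0 := norm_ne_zero_iff.mpr hz0
    rw [ContinuousLinearMap.smul_apply, h2, smul_eq_mul, inv_mul_cancel₀ h3]
  · intro y hy
    have : mkC y = 0 := by
      simpa [hmk] using (Submodule.Quotient.mk_eq_zero F).mpr hy
    simp [this]

/-- A biorthogonal system inside an infinite-dimensional subspace. -/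
lemma exists_biorthogonal (M : Submodule ℝ X) (hM : ¬ FiniteDimensional ℝ M) :
    ∃ (x : ℕ → X) (f : ℕ → X →L[ℝ] ℝ), (∀ n, x n ∈ M) ∧
      (∀ n m, f n (x m) = if n = m then 1 else 0) := by
  classical
  obtain ⟨g, hg, hg'⟩ := exists_seq_of_forall_finset_exists
    (fun p : X × (X →L[ℝ] ℝ) => p.1 ∈ M ∧ p.2 p.1 = 1)
    (fun p q => p.2 q.1 = 0 ∧ q.2 p.1 = 0)
    (by
      intro s _
      set K : Submodule ℝ X := ⨅ p ∈ s, LinearMap.ker (p.2 : X →ₗ[ℝ] ℝ) with hK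
      have hMK : ¬ FiniteDimensional ℝ (M ⊓ K : Submodule ℝ X) :=
        not_finiteDimensional_inf_finset_ker hM s
      set F : Submodule ℝ X := Submodule.span ℝ (↑(s.image Prod.fst) : Set X) with hF
      haveI hFfin : FiniteDimensional ℝ F := FiniteDimensional.span_finset ℝ _
      have : ¬ (M ⊓ K ≤ F) := by
        intro hle
        exact hMK (Submodule.finiteDimensional_of_le hle)
      obtain ⟨x', hx'MK, hx'F⟩ := SetLike.not_le_iff_exists.mp this
      obtain ⟨f, hfx', hfF⟩ := exists_functional_eq_one_of_nmem hFfin hx'F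
      refine ⟨(x', f), ⟨hx'MK.1, hfx'⟩, ?_⟩
      intro p hp
      constructor
      · have hx'K := hx'MK.2
        have hle : K ≤ LinearMap.ker (p.2 : X →ₗ[ℝ] ℝ) := by
          rw [hK]
          exact iInf_le_of_le p (iInf_le _ hp)
        exact hle hx'K
      · refine hfF p.1 (Submodule.subset_span ?_)
        simp only [Finset.coe_image, Set.mem_image, Finset.mem_coe]
        exact ⟨p, hp, rfl⟩)
  refine ⟨fun n => (g n).1, fun n => (g n).2, fun n => (hg n).1, ?_⟩
  intro n m
  rcases lt_trichotomy n m with h | rfl | h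
  · have := hg' n m h
    simp [if_neg h.ne, this.1]
  · simp [(hg n).2]
  · have := hg' m n h
    simp [if_neg h.ne', this.2]

lemma linearIndependent_of_biorthogonal {x : ℕ → X} {f : ℕ → X →L[ℝ] ℝ}
    (h : ∀ n m, f n (x m) = if n = m then 1 else 0) : LinearIndependent ℝ x := by
  rw [linearIndependent_iff']
  intro s g hg j hj
  have := congrArg (f j) hg
  rw [map_sum, map_zero] at this
  have heq : ∀ i ∈ s, f j (g i • x i) = if j = i then g i else 0 := by
    intro i _
    rw [map_smul, h j i]
    by_cases hji : j = i <;> simp [hji]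
  rw [Finset.sum_congr rfl heq, Finset.sum_ite_eq s j g, if_pos hj] at this
  exact this

lemma not_finiteDimensional_span_of_biorthogonal {x : ℕ → X} {f : ℕ → X →L[ℝ] ℝ}
    (h : ∀ n m, f n (x m) = if n = m then 1 else 0) :
    ¬ FiniteDimensional ℝ (Submodule.span ℝ (Set.range x)) := by
  intro hfin
  set V := Submodule.span ℝ (Set.range x) with hV
  have hx : LinearIndependent ℝ x := linearIndependent_of_biorthogonal h
  set x' : ℕ → V := fun n => ⟨x n, Submodule.subset_span (Set.mem_range_self n)⟩ with hx'
  have hx'ind : LinearIndependent ℝ x' := by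
    have hcomp : x = (V.subtype : V →ₗ[ℝ] X) ∘ x' := rfl
    rw [hcomp] at hx
    exact LinearIndependent.of_comp _ hx
  have h1 : Cardinal.aleph0 ≤ Module.rank ℝ V := hx'ind.aleph0_le_rank
  exact absurd (Module.rank_lt_aleph0 ℝ V) (not_lt.mpr h1)

end Helpers

section Perturb

variable {X : Type*} [NormedAddCommGroup X] [NormedSpace ℝ X]
variable {x : ℕ → X} {f : ℕ → X →L[ℝ] ℝ} {c : ℕ → X} {δ : ℝ}

lemma key_bound (hδ0 : 0 < δ) (hc : ∀ n, ‖c n‖ ≤ δ / 2 / 2 ^ n / (‖f n‖ + 1)) (z : X) (n : ℕ) :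
    ‖f n z • c n‖ ≤ ‖z‖ * (δ / 2 / 2 ^ n) := by
  have h1 : ‖f n z • c n‖ = |f n z| * ‖c n‖ := by
    rw [norm_smul, Real.norm_eq_abs]
  rw [h1]
  have h2 : |f n z| ≤ ‖f n‖ * ‖z‖ := (f n).le_opNorm z
  have h3 : (0:ℝ) < ‖f n‖ + 1 := by positivity
  have hA : (0:ℝ) ≤ δ / 2 / 2 ^ n := by positivity
  have h4 : ‖f n‖ * (δ / 2 / 2 ^ n / (‖f n‖ + 1)) ≤ δ / 2 / 2 ^ n := by
    have hr : ‖f n‖ / (‖f n‖ + 1) ≤ 1 := by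
      rw [div_le_one h3]; linarith
    calc ‖f n‖ * (δ / 2 / 2 ^ n / (‖f n‖ + 1)) = (δ / 2 / 2 ^ n) * (‖f n‖ / (‖f n‖ + 1)) := by
          ring
      _ ≤ (δ / 2 / 2 ^ n) * 1 := mul_le_mul_of_nonneg_left hr hA
      _ = δ / 2 / 2 ^ n := mul_one _
  calc |f n z| * ‖c n‖ ≤ (‖f n‖ * ‖z‖) * (δ / 2 / 2 ^ n / (‖f n‖ + 1)) :=
        mul_le_mul h2 (hc n) (norm_nonneg _) (by positivity)
    _ = ‖z‖ * (‖f n‖ * (δ / 2 / 2 ^ n / (‖f n‖ + 1))) := by ring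
    _ ≤ ‖z‖ * (δ / 2 / 2 ^ n) := mul_le_mul_of_nonneg_left h4 (norm_nonneg z)

/-- The perturbation map. -/
noncomputable def pertFun (f : ℕ → X →L[ℝ] ℝ) (c : ℕ → X) (z : X) : X :=
  z + ∑' n, f n z • c n

lemma finite_support_aux (hbi : ∀ n m, f n (x m) = if n = m then 1 else 0)
    {z : X} (hz : z ∈ Submodule.span ℝ (Set.range x)) :
    (Function.support fun n => f n z • c n).Finite := by
  rw [Finsupp.mem_span_range_iff_exists_finsupp] at hz
  obtain ⟨l, rfl⟩ := hz
  apply Set.Finite.subset l.finite_support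
  intro n hn
  simp only [Function.mem_support, ne_eq] at hn
  by_contra hns
  apply hn
  have : f n (l.sum fun i a => a • x i) = 0 := by
    rw [map_finsuppSum]
    rw [Finsupp.sum]
    apply Finset.sum_eq_zero
    intro i hi
    rw [map_smul]
    have hne : n ≠ i := by
      rintro rfl
      exact hns (Function.mem_support.mpr (Finsupp.mem_support_iff.mp hi))
    rw [hbi n i, if_neg hne, smul_zero]
  rw [this, zero_smul]

lemma summable_pert (hbi : ∀ n m, f n (x m) = if n = m then 1 else 0)
    {z : X} (hz : z ∈ Submodule.span ℝ (Set.range x)) :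
    Summable fun n => f n z • c n :=
  summable_of_finite_support (finite_support_aux hbi hz)

lemma pert_diff_bound (hδ0 : 0 < δ) (hc : ∀ n, ‖c n‖ ≤ δ / 2 / 2 ^ n / (‖f n‖ + 1))
    (hbi : ∀ n m, f n (x m) = if n = m then 1 else 0)
    {z : X} (hz : z ∈ Submodule.span ℝ (Set.range x)) :
    ‖pertFun f c z - z‖ ≤ δ * ‖z‖ := by
  have h1 : pertFun f c z - z = ∑' n, f n z • c n := by
    rw [pertFun]; abel
  rw [h1]
  have hsn : Summable fun n => ‖f n z • c n‖ := by
    apply summable_of_finite_support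
    apply Set.Finite.subset (finite_support_aux (c := c) hbi hz)
    intro n hn
    simp only [Function.mem_support, ne_eq, norm_eq_zero] at hn ⊢
    exact hn
  calc ‖∑' n, f n z • c n‖ ≤ ∑' n, ‖f n z • c n‖ := norm_tsum_le_tsum_norm hsn
    _ ≤ ∑' n, ‖z‖ * (δ / 2 / 2 ^ n) :=
        Summable.tsum_le_tsum (key_bound hδ0 hc z) hsn ((summable_geometric_two' δ).mul_left ‖z‖)
    _ = ‖z‖ * ∑' n, δ / 2 / 2 ^ n := tsum_mul_left
    _ = ‖z‖ * δ := by rw [tsum_geometric_two' δ]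
    _ = δ * ‖z‖ := mul_comm _ _

lemma pert_apply_x (hbi : ∀ n m, f n (x m) = if n = m then 1 else 0) (m : ℕ) :
    pertFun f c (x m) = x m + c m := by
  rw [pertFun]
  congr 1
  rw [tsum_eq_single m]
  · rw [hbi m m, if_pos rfl, one_smul]
  · intro n hn
    rw [hbi n m, if_neg hn, zero_smul]

end Perturb

section PertLin

variable {X : Type*} [NormedAddCommGroup X] [NormedSpace ℝ X]
variable (x : ℕ → X) (f : ℕ → X →L[ℝ] ℝ) (c : ℕ → X)
    (hbi : ∀ n m, f n (x m) = if n = m then 1 else 0)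

/-- The perturbation linear map restricted to the span. -/
noncomputable def pertLin : (Submodule.span ℝ (Set.range x)) →ₗ[ℝ] X where
  toFun v := pertFun f c v.1
  map_add' a b := by
    simp only [pertFun, Submodule.coe_add]
    have ha := summable_pert (c := c) hbi a.2
    have hb := summable_pert (c := c) hbi b.2
    have hcg : ∀ n : ℕ, f n (a.1 + b.1) • c n = f n a.1 • c n + f n b.1 • c n := by
      intro n; rw [map_add, add_smul]
    rw [tsum_congr hcg, Summable.tsum_add ha hb]
    abel
  map_smul' r a := by
    simp only [pertFun, Submodule.coe_smul, RingHom.id_apply]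
    have ha := summable_pert (c := c) hbi a.2
    have hcg : ∀ n : ℕ, f n (r • a.1) • c n = r • (f n a.1 • c n) := by
      intro n; rw [map_smul, smul_smul, smul_eq_mul]
    rw [tsum_congr hcg, Summable.tsum_const_smul r ha, smul_add]

lemma pertLin_apply (v : Submodule.span ℝ (Set.range x)) :
    pertLin x f c hbi v = pertFun f c v.1 := rfl

lemma pertLin_apply_x (n : ℕ) :
    pertLin x f c hbi ⟨x n, Submodule.subset_span (Set.mem_range_self n)⟩ = x n + c n := by
  rw [pertLin_apply]
  exact pert_apply_x hbi n

lemma pertLin_range :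
    LinearMap.range (pertLin x f c hbi) = Submodule.span ℝ (Set.range (fun n => x n + c n)) := by
  set V := Submodule.span ℝ (Set.range x) with hV
  set x' : ℕ → V := fun n => ⟨x n, Submodule.subset_span (Set.mem_range_self n)⟩ with hx'
  have htop : Submodule.span ℝ (Set.range x') = (⊤ : Submodule ℝ V) := by
    apply Submodule.map_injective_of_injective (Submodule.injective_subtype V)
    rw [Submodule.map_span, Submodule.map_top, Submodule.range_subtype]
    have him : V.subtype '' Set.range x' = Set.range x := by
      rw [← Set.range_comp]
      rfl
    rw [him, hV]
  rw [LinearMap.range_eq_map, ← htop, Submodule.map_span]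
  congr 1
  rw [← Set.range_comp]
  have : (pertLin x f c hbi ∘ x') = fun n => x n + c n := by
    funext n
    exact pertLin_apply_x x f c hbi n
  rw [this]

variable {δ : ℝ}

lemma pertLin_diff (hδ0 : 0 < δ) (hc : ∀ n, ‖c n‖ ≤ δ / 2 / 2 ^ n / (‖f n‖ + 1))
    (v : Submodule.span ℝ (Set.range x)) :
    ‖pertLin x f c hbi v - v.1‖ ≤ δ * ‖v.1‖ := by
  rw [pertLin_apply]
  exact pert_diff_bound hδ0 hc hbi v.2

lemma pertLin_lower (hδ0 : 0 < δ) (hc : ∀ n, ‖c n‖ ≤ δ / 2 / 2 ^ n / (‖f n‖ + 1))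
    (v : Submodule.span ℝ (Set.range x)) :
    (1 - δ) * ‖v.1‖ ≤ ‖pertLin x f c hbi v‖ := by
  have h1 := pertLin_diff x f c hbi hδ0 hc v
  have h2 : ‖v.1‖ - ‖pertLin x f c hbi v‖ ≤ ‖v.1 - pertLin x f c hbi v‖ :=
    norm_sub_norm_le _ _
  rw [norm_sub_rev] at h2
  nlinarith [norm_nonneg v.1]

lemma pertLin_injective (hδ0 : 0 < δ) (hδ1 : δ < 1)
    (hc : ∀ n, ‖c n‖ ≤ δ / 2 / 2 ^ n / (‖f n‖ + 1)) :
    Function.Injective (pertLin x f c hbi) := by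
  rw [← LinearMap.ker_eq_bot]
  rw [Submodule.eq_bot_iff]
  intro v hv
  rw [LinearMap.mem_ker] at hv
  have := pertLin_lower x f c hbi hδ0 hc v
  rw [hv, norm_zero] at this
  have hnv : ‖v.1‖ = 0 := by nlinarith [norm_nonneg v.1]
  have : v.1 = 0 := norm_eq_zero.mp hnv
  exact Subtype.ext this

end PertLin

section GammaDelta

variable {X Y : Type*} [NormedAddCommGroup X] [NormedSpace ℝ X]
    [NormedAddCommGroup Y] [NormedSpace ℝ Y]

lemma top_not_finiteDimensional (h : ¬ FiniteDimensional ℝ X) :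
    ¬ FiniteDimensional ℝ (⊤ : Submodule ℝ X) := by
  intro htop
  exact h (Submodule.topEquiv.finiteDimensional)

lemma restrictedNorm_le (A : X →L[ℝ] Y) (M : Submodule ℝ X) :
    restrictedNorm A M ≤ ‖A‖ := by
  rw [restrictedNorm]
  refine ContinuousLinearMap.opNorm_le_bound _ (ContinuousLinearMap.opNorm_nonneg _) ?_
  intro m
  calc ‖(A.comp M.subtypeL) m‖ = ‖A m.1‖ := rfl
    _ ≤ ‖A‖ * ‖m.1‖ := A.le_opNorm _
    _ = ‖A‖ * ‖m‖ := rfl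

lemma opGamma_nonneg (A : X →L[ℝ] Y) : 0 ≤ opGamma A := by
  apply Real.sInf_nonneg
  rintro r ⟨M, hM, rfl⟩
  exact ContinuousLinearMap.opNorm_nonneg _

lemma opGamma_bddBelow (A : X →L[ℝ] Y) :
    BddBelow {r : ℝ | ∃ M : Submodule ℝ X, ¬ FiniteDimensional ℝ M ∧ r = restrictedNorm A M} := by
  refine ⟨0, ?_⟩
  rintro r ⟨M, hM, rfl⟩
  exact ContinuousLinearMap.opNorm_nonneg _

lemma opGamma_le (A : X →L[ℝ] Y) {V : Submodule ℝ X} (hV : ¬ FiniteDimensional ℝ V) :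
    opGamma A ≤ restrictedNorm A V :=
  csInf_le (opGamma_bddBelow A) ⟨V, hV, rfl⟩

lemma opGamma_le_norm (A : X →L[ℝ] Y) (h : ¬ FiniteDimensional ℝ X) : opGamma A ≤ ‖A‖ :=
  (opGamma_le A (top_not_finiteDimensional h)).trans (restrictedNorm_le A ⊤)

lemma opDelta_bddAbove (A : X →L[ℝ] Y) :
    BddAbove {r : ℝ | ∃ M : Submodule ℝ X, ¬ FiniteDimensional ℝ M ∧
      r = opGamma (A.comp M.subtypeL)} := by
  refine ⟨‖A‖, ?_⟩
  rintro r ⟨M, hM, rfl⟩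
  have h1 : opGamma (A.comp M.subtypeL) ≤ ‖A.comp M.subtypeL‖ :=
    opGamma_le_norm (A.comp M.subtypeL) hM
  exact h1.trans (restrictedNorm_le A M)

lemma opDelta_nonneg (A : X →L[ℝ] Y) (h : ¬ FiniteDimensional ℝ X) : 0 ≤ opDelta A := by
  have hmem : opGamma (A.comp (⊤ : Submodule ℝ X).subtypeL) ∈
      {r : ℝ | ∃ M : Submodule ℝ X, ¬ FiniteDimensional ℝ M ∧
        r = opGamma (A.comp M.subtypeL)} := ⟨⊤, top_not_finiteDimensional h, rfl⟩
  exact (opGamma_nonneg _).trans (le_csSup (opDelta_bddAbove A) hmem)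

end GammaDelta

/-- `Δ(T|_E) ≥ Δ(T)` for any dense subspace `E`. -/
theorem delta_restrict_ge {X Y : Type*} [NormedAddCommGroup X] [NormedSpace ℝ X]
    [NormedAddCommGroup Y] [NormedSpace ℝ Y] (hX : ¬ FiniteDimensional ℝ X)
    (T : X →L[ℝ] Y) (E : Submodule ℝ X) (hE : Dense (E : Set X)) :
    opDelta (T.comp E.subtypeL) ≥ opDelta T := by
  have hE_fd : ¬ FiniteDimensional ℝ E := by
    intro hfin
    apply hX
    haveI := hfin
    have hclosed : IsClosed (E : Set X) := E.closed_of_finiteDimensional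
    have huniv : (E : Set X) = Set.univ := by
      rw [← hclosed.closure_eq]; exact hE.closure_eq
    have hEtop : E = ⊤ := by
      rw [Submodule.eq_top_iff']
      intro z
      have : z ∈ (E : Set X) := by rw [huniv]; trivial
      exact this
    rw [hEtop] at hfin
    exact Submodule.topEquiv.finiteDimensional
  set TE := T.comp E.subtypeL with hTE
  have hbdd := opDelta_bddAbove TE
  have hD0 : 0 ≤ opDelta TE := opDelta_nonneg TE hE_fd
  set D := opDelta TE with hD
  rw [ge_iff_le, opDelta]
  apply Real.sSup_le _ hD0
  rintro r ⟨M, hM, rfl⟩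
  have key : ∀ δ : ℝ, 0 < δ → δ < 1 →
      opGamma (T.comp M.subtypeL) ≤ (1 + δ) * D + δ * ‖T‖ := by
    intro δ hδ0 hδ1
    have hpos1δ : (0:ℝ) < 1 + δ := by linarith
    obtain ⟨x, f, hxM, hbi⟩ := exists_biorthogonal M hM
    have hch : ∀ n : ℕ, ∃ en, en ∈ E ∧ ‖x n - en‖ ≤ δ / 2 / 2 ^ n / (‖f n‖ + 1) := by
      intro n
      have hpos : 0 < δ / 2 / 2 ^ n / (‖f n‖ + 1) := by positivity
      obtain ⟨en, henE, hd⟩ := Metric.mem_closure_iff.mp (hE (x n)) _ hpos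
      exact ⟨en, henE, by rw [← dist_eq_norm]; exact hd.le⟩
    choose e heE hec using hch
    set cc : ℕ → X := fun n => e n - x n with hcc
    have hccb : ∀ n, ‖cc n‖ ≤ δ / 2 / 2 ^ n / (‖f n‖ + 1) := by
      intro n
      rw [hcc]
      simp only
      rw [norm_sub_rev]
      exact hec n
    set V := Submodule.span ℝ (Set.range x) with hV
    have hVM : V ≤ M := Submodule.span_le.mpr (by rintro _ ⟨n, rfl⟩; exact hxM n)
    have hVfd : ¬ FiniteDimensional ℝ V := not_finiteDimensional_span_of_biorthogonal hbi
    set U := pertLin x f cc hbi with hU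
    have hUinj : Function.Injective U := pertLin_injective x f cc hbi hδ0 hδ1 hccb
    set N := LinearMap.range U with hN
    have hNE : N ≤ E := by
      rw [hN, hU, pertLin_range]
      apply Submodule.span_le.mpr
      rintro _ ⟨n, rfl⟩
      have hxe : (fun n => x n + cc n) n = e n := by simp [hcc]
      rw [hxe]
      exact heE n
    have hNfd : ¬ FiniteDimensional ℝ N := by
      intro hfin
      apply hVfd
      haveI := hfin
      exact (LinearEquiv.ofInjective U hUinj).symm.finiteDimensional
    set N'' := N.comap E.subtype with hN''
    have hN''fd : ¬ FiniteDimensional ℝ N'' := by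
      intro hfin
      apply hNfd
      haveI := hfin
      exact (Submodule.comapSubtypeEquivOfLe hNE).finiteDimensional
    have hmain : ∀ b ∈ {r : ℝ | ∃ W : Submodule ℝ N'', ¬ FiniteDimensional ℝ W ∧
        r = restrictedNorm (TE.comp N''.subtypeL) W},
        (opGamma (T.comp M.subtypeL) - δ * ‖T‖) / (1 + δ) ≤ b := by
      rintro b ⟨Wt, hWt, rfl⟩
      set W1 := Wt.map N''.subtype with hW1
      set W := W1.map E.subtype with hW
      have hbeq : restrictedNorm (TE.comp N''.subtypeL) Wt = ‖T.comp W.subtypeL‖ := by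
        rw [restrictedNorm, norm_comp_subtypeL_map TE N'' Wt, hTE,
          norm_comp_subtypeL_map T E W1]
      have hWN : W ≤ N := by
        rw [hW]
        calc W1.map E.subtype ≤ N''.map E.subtype :=
              Submodule.map_mono (by rw [hW1]; exact Submodule.map_subtype_le N'' Wt)
          _ ≤ N := by rw [hN'', Submodule.map_comap_subtype]; exact inf_le_right
      have hWfd : ¬ FiniteDimensional ℝ W := by
        intro hfin
        apply hWt
        haveI := hfin
        have e2 : (W1 : Submodule ℝ E) ≃ₗ[ℝ] W :=
          Submodule.equivMapOfInjective _ (Submodule.injective_subtype E) W1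
        haveI : FiniteDimensional ℝ W1 := e2.symm.finiteDimensional
        have e1 : (Wt : Submodule ℝ N'') ≃ₗ[ℝ] W1 :=
          Submodule.equivMapOfInjective _ (Submodule.injective_subtype N'') Wt
        exact e1.symm.finiteDimensional
      set W'v := Submodule.comap U W with hW'v
      have hmapW' : Submodule.map U W'v = W := by
        rw [hW'v, Submodule.map_comap_eq, ← hN]
        exact inf_eq_right.mpr hWN
      have hW'vfd : ¬ FiniteDimensional ℝ W'v := by
        intro hfin
        apply hWfd
        haveI := hfin
        have e3 : (W'v : Submodule ℝ V) ≃ₗ[ℝ] (W'v.map U) :=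
          Submodule.equivMapOfInjective _ hUinj W'v
        rw [hmapW'] at e3
        exact e3.finiteDimensional
      set W'x := W'v.map V.subtype with hW'x
      have hW'xM : W'x ≤ M := le_trans (by rw [hW'x]; exact Submodule.map_subtype_le V W'v) hVM
      have hW'xfd : ¬ FiniteDimensional ℝ W'x := by
        intro hfin
        apply hW'vfd
        haveI := hfin
        have e4 : (W'v : Submodule ℝ V) ≃ₗ[ℝ] W'x :=
          Submodule.equivMapOfInjective _ (Submodule.injective_subtype V) W'v
        exact e4.symm.finiteDimensional
      have hcle : opGamma (T.comp M.subtypeL) ≤ ‖T.comp W'x.subtypeL‖ := by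
        have hcfd : ¬ FiniteDimensional ℝ (W'x.comap M.subtype) := by
          intro hfin
          apply hW'xfd
          haveI := hfin
          exact (Submodule.comapSubtypeEquivOfLe hW'xM).finiteDimensional
        have hle := opGamma_le (T.comp M.subtypeL) hcfd
        rw [restrictedNorm, norm_comp_subtypeL_map T M (W'x.comap M.subtype),
          Submodule.map_comap_subtype, inf_eq_right.mpr hW'xM] at hle
        exact hle
      set b' := ‖T.comp W.subtypeL‖ with hb'
      have hb'0 : 0 ≤ b' := ContinuousLinearMap.opNorm_nonneg _
      have hfinal : ‖T.comp W'x.subtypeL‖ ≤ (1 + δ) * b' + δ * ‖T‖ := by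
        refine ContinuousLinearMap.opNorm_le_bound _ (by positivity) ?_
        intro u
        obtain ⟨v, hvW'v, hv1⟩ := Submodule.mem_map.mp u.2
        have hw : U v ∈ W := hmapW' ▸ Submodule.mem_map_of_mem hvW'v
        have hTw : ‖T (U v)‖ ≤ b' * ‖U v‖ := by
          have happ2 : T (U v) = (T.comp W.subtypeL) ⟨U v, hw⟩ := rfl
          rw [happ2]
          calc ‖(T.comp W.subtypeL) ⟨U v, hw⟩‖ ≤ b' * ‖(⟨U v, hw⟩ : W)‖ :=
                ContinuousLinearMap.le_opNorm _ _
            _ = b' * ‖U v‖ := rfl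
        have hdiff : ‖U v - v.1‖ ≤ δ * ‖v.1‖ := pertLin_diff x f cc hbi hδ0 hccb v
        have happ : (T.comp W'x.subtypeL) u = T u.1 := rfl
        have huv : u.1 = v.1 := by rw [← hv1]; rfl
        have est : ‖T v.1‖ ≤ ((1 + δ) * b' + δ * ‖T‖) * ‖v.1‖ := by
          have harg : U v + (v.1 - U v) = v.1 := by abel
          have h5 : ‖T v.1‖ ≤ ‖T (U v)‖ + ‖T‖ * ‖v.1 - U v‖ := by
            calc ‖T v.1‖ = ‖T (U v) + T (v.1 - U v)‖ := by
                  rw [← map_add, harg]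
              _ ≤ ‖T (U v)‖ + ‖T (v.1 - U v)‖ := norm_add_le _ _
              _ ≤ ‖T (U v)‖ + ‖T‖ * ‖v.1 - U v‖ := by
                  exact add_le_add_right (T.le_opNorm _) _
          have h6 : ‖v.1 - U v‖ ≤ δ * ‖v.1‖ := by rw [norm_sub_rev]; exact hdiff
          have h7 : ‖U v‖ ≤ (1 + δ) * ‖v.1‖ := by
            calc ‖U v‖ = ‖v.1 + (U v - v.1)‖ := by
                  have : v.1 + (U v - v.1) = U v := by abel
                  rw [this]
              _ ≤ ‖v.1‖ + ‖U v - v.1‖ := norm_add_le _ _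
              _ ≤ ‖v.1‖ + δ * ‖v.1‖ := add_le_add_right hdiff _
              _ = (1 + δ) * ‖v.1‖ := by ring
          calc ‖T v.1‖ ≤ ‖T (U v)‖ + ‖T‖ * ‖v.1 - U v‖ := h5
            _ ≤ b' * ‖U v‖ + ‖T‖ * (δ * ‖v.1‖) :=
                add_le_add hTw (mul_le_mul_of_nonneg_left h6 (norm_nonneg (T : X →L[ℝ] Y)))
            _ ≤ b' * ((1 + δ) * ‖v.1‖) + ‖T‖ * (δ * ‖v.1‖) :=
                add_le_add_left (mul_le_mul_of_nonneg_left h7 hb'0) _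
            _ = ((1 + δ) * b' + δ * ‖T‖) * ‖v.1‖ := by ring
        have hnu : ‖u‖ = ‖v.1‖ := by
          have : ‖u‖ = ‖u.1‖ := rfl
          rw [this, huv]
        rw [happ, huv, hnu]
        exact est
      rw [hbeq, div_le_iff₀ hpos1δ]
      nlinarith [hcle, hfinal]
    have hne : Set.Nonempty {r : ℝ | ∃ W : Submodule ℝ N'', ¬ FiniteDimensional ℝ W ∧
        r = restrictedNorm (TE.comp N''.subtypeL) W} :=
      ⟨_, ⟨⊤, top_not_finiteDimensional hN''fd, rfl⟩⟩
    have h1 : (opGamma (T.comp M.subtypeL) - δ * ‖T‖) / (1 + δ)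
        ≤ opGamma (TE.comp N''.subtypeL) := by
      rw [opGamma]
      exact le_csInf hne hmain
    have h2 : opGamma (TE.comp N''.subtypeL) ≤ D := by
      rw [hD, opDelta]
      exact le_csSup hbdd ⟨N'', hN''fd, rfl⟩
    have h3 := (div_le_iff₀ hpos1δ).mp (h1.trans h2)
    nlinarith [h3]
  apply le_of_forall_pos_le_add
  intro ε hε
  set S := D + ‖T‖ with hS
  have hS0 : 0 ≤ S := add_nonneg hD0 (norm_nonneg _)
  set δ := min (1/2 : ℝ) (ε / (S + 1)) with hδ
  have hδ0 : 0 < δ := lt_min (by norm_num) (by positivity)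
  have hδ1 : δ < 1 := lt_of_le_of_lt (min_le_left _ _) (by norm_num)
  have hkey := key δ hδ0 hδ1
  have hδS : δ * S ≤ ε := by
    have h1 : δ ≤ ε / (S + 1) := min_le_right _ _
    have h2 : δ * S ≤ ε / (S + 1) * S := mul_le_mul_of_nonneg_right h1 hS0
    have h3 : ε / (S + 1) * S ≤ ε := by
      rw [div_mul_eq_mul_div, div_le_iff₀ (by positivity)]
      nlinarith
    exact le_trans h2 h3
  have hexp : (1 + δ) * D + δ * ‖T‖ = D + δ * S := by rw [hS]; ring
  linarith [hkey]
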